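/- Let F(x) = ∑_{|α| ≤ n} c_α H_{γ,α}(x) be a Y-valued polynomial of Wiener-chaos degree n on a Gaussian space (X, γ), with Hermite coefficients c_α ∈ Y. Then for every u ∈ Y, ⟨u, H_Y u⟩_Y ≤ n ⟨u, C_Y u⟩_Y, where H_Y = E_γ[D_E F (D_E F)*] is the output derivative sensitivity operator and C_Y = E_γ[(F − F̄) ⊗ (F − F̄)] is the centered covariance; i.e., the derivative inverse inequality holds with constant K_D = n. -/

import Mathlib

open MeasureTheory RealInnerProductSpace ProbabilityTheory

/-- The normalized probabilists' Hermite polynomial `He_k / √(k!)`, orthonormal in `L²(N(0,1))`. -/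
noncomputable def normHermite (k : ℕ) (t : ℝ) : ℝ :=
  Polynomial.aeval t (Polynomial.hermite k) / Real.sqrt (Nat.factorial k)

section Aux

open Polynomial Real Filter Set
open scoped ENNReal NNReal


noncomputable section SD

/-- real Hermite polynomial -/
noncomputable def Hr (k : ℕ) : ℝ[X] := (Polynomial.hermite k).map (algebraMap ℤ ℝ)

lemma Hr_zero : Hr 0 = 1 := by simp [Hr]

lemma Hr_succ (k : ℕ) : Hr (k+1) = X * Hr k - derivative (Hr k) := by
  simp [Hr, hermite_succ, Polynomial.derivative_map]

lemma derivative_Hr : ∀ k : ℕ, derivative (Hr k) = (k : ℝ[X]) * Hr (k - 1)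
  | 0 => by simp [Hr_zero]
  | 1 => by simp [Hr_succ, Hr_zero]
  | (k+2) => by
      have ih := derivative_Hr (k+1)
      have h1 : (k:ℕ)+1-1 = k := rfl
      rw [h1] at ih
      have h2 : (k:ℕ)+2-1 = k+1 := rfl
      rw [h2, Hr_succ (k+1), derivative_sub, derivative_mul, derivative_X, one_mul, ih,
        derivative_mul, Polynomial.derivative_natCast, zero_mul, zero_add, Hr_succ k]
      push_cast
      ring

lemma monic_Hr (k : ℕ) : (Hr k).Monic := (hermite_monic k).map _

lemma Hr_ne_zero (k : ℕ) : Hr k ≠ 0 := (monic_Hr k).ne_zero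

end SD


lemma tendsto_poly_gauss_atTop (p : ℝ[X]) {b : ℝ} (hb : 0 < b) :
    Tendsto (fun x => p.eval x * Real.exp (-(b * x^2))) atTop (nhds 0) := by
  have h1 : Tendsto (fun x => p.eval x / Real.exp x) atTop (nhds 0) := p.tendsto_div_exp_atTop
  have h1' : Tendsto (fun x => ‖p.eval x / Real.exp x‖) atTop (nhds 0) := by
    simpa using h1.norm
  refine squeeze_zero_norm' ?_ h1'
  filter_upwards [eventually_ge_atTop (max 1 (1/b))] with x hx
  have hx1 : (1:ℝ) ≤ x := le_trans (le_max_left _ _) hx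
  have hxb : 1/b ≤ x := le_trans (le_max_right _ _) hx
  have hle : x ≤ b * x^2 := by
    have h0 : 1 ≤ b * x := by
      rw [div_le_iff₀ hb] at hxb; nlinarith
    nlinarith
  have hexp : Real.exp (-(b * x^2)) ≤ Real.exp (-x) := Real.exp_le_exp.mpr (by linarith)
  rw [norm_mul, Real.norm_eq_abs (Real.exp _), abs_of_pos (Real.exp_pos _),
    norm_div, Real.norm_eq_abs (Real.exp _), abs_of_pos (Real.exp_pos _),
    div_eq_mul_inv, ← Real.exp_neg]
  exact mul_le_mul_of_nonneg_left hexp (norm_nonneg _)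

lemma tendsto_poly_gauss_atBot (p : ℝ[X]) {b : ℝ} (hb : 0 < b) :
    Tendsto (fun x => p.eval x * Real.exp (-(b * x^2))) atBot (nhds 0) := by
  have h := (tendsto_poly_gauss_atTop (p.comp (-X)) hb).comp tendsto_neg_atBot_atTop
  convert h using 1
  funext x
  simp [Function.comp, Polynomial.eval_comp, neg_sq]

lemma continuous_poly_gauss (p : ℝ[X]) (b : ℝ) :
    Continuous (fun x => p.eval x * Real.exp (-(b * x^2))) :=
  p.continuous.mul (Real.continuous_exp.comp (by continuity))

lemma bdd_poly_gauss (p : ℝ[X]) {b : ℝ} (hb : 0 < b) :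
    ∃ C : ℝ, ∀ x, ‖p.eval x * Real.exp (-(b * x^2))‖ ≤ C := by
  set f := fun x => p.eval x * Real.exp (-(b * x^2)) with hf
  have hc : Continuous f := continuous_poly_gauss p b
  have h1 := tendsto_poly_gauss_atTop p hb
  have h2 := tendsto_poly_gauss_atBot p hb
  obtain ⟨a, ha⟩ := (h1.eventually (eventually_abs_sub_lt 0 one_pos)).exists_forall_of_atTop
  obtain ⟨a', hb'⟩ := (h2.eventually (eventually_abs_sub_lt 0 one_pos)).exists_forall_of_atBot
  obtain ⟨C0, hC0⟩ := (isCompact_Icc (a := a') (b := a)).exists_bound_of_continuousOn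
    hc.continuousOn
  refine ⟨max 1 C0, fun x => ?_⟩
  rcases le_total x a' with h | h
  · have := hb' x h; rw [sub_zero] at this
    exact le_max_of_le_left (by simpa [Real.norm_eq_abs, abs_mul, abs_of_pos (Real.exp_pos _)] using this.le)
  rcases le_total a x with h' | h'
  · have := ha x h'; rw [sub_zero] at this
    exact le_max_of_le_left (by simpa [Real.norm_eq_abs, abs_mul, abs_of_pos (Real.exp_pos _)] using this.le)
  · exact le_max_of_le_right (hC0 x ⟨h, h'⟩)

lemma integrable_poly_gauss (p : ℝ[X]) :
    Integrable (fun x => p.eval x * Real.exp (-(x^2/2))) (volume : Measure ℝ) := by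
  obtain ⟨C, hC⟩ := bdd_poly_gauss p (b := 4⁻¹) (by norm_num)
  have hmaj : Integrable (fun x : ℝ => C * Real.exp (-(4⁻¹ : ℝ) * x^2)) volume :=
    (integrable_exp_neg_mul_sq (by norm_num : (0:ℝ) < 4⁻¹)).const_mul C
  refine hmaj.mono' ?_ ?_
  · exact (p.continuous.mul (Real.continuous_exp.comp (by continuity))).aestronglyMeasurable
  · refine ae_of_all _ fun x => ?_
    have h1 : p.eval x * Real.exp (-(x^2/2))
        = (p.eval x * Real.exp (-(4⁻¹ * x^2))) * Real.exp (-(4⁻¹ * x^2)) := by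
      rw [mul_assoc, ← Real.exp_add]; congr 2; ring
    rw [h1, norm_mul, Real.norm_eq_abs (Real.exp _), abs_of_pos (Real.exp_pos _)]
    calc ‖p.eval x * Real.exp (-(4⁻¹ * x^2))‖ * Real.exp (-(4⁻¹ * x^2))
        ≤ C * Real.exp (-(4⁻¹ * x^2)) :=
          mul_le_mul_of_nonneg_right (hC x) (Real.exp_pos _).le
      _ = C * Real.exp (-4⁻¹ * x^2) := by ring_nf


lemma hasDerivAt_gaussExp (x : ℝ) :
    HasDerivAt (fun y : ℝ => Real.exp (-(y^2/2))) (-x * Real.exp (-(x^2/2))) x := by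
  have h1 : HasDerivAt (fun y : ℝ => -(y^2/2)) (-x) x := by
    have := (hasDerivAt_pow 2 x).div_const 2
    have h2 := this.neg
    refine h2.congr_deriv (Eq.symm ?_)
    simp [pow_one]
    try ring
  have := h1.exp
  convert this using 1
  ring

lemma stein_poly (q : ℝ[X]) :
    ∫ x : ℝ, (x * q.eval x - (derivative q).eval x) * Real.exp (-(x^2/2)) = 0 := by
  set f : ℝ → ℝ := fun x => -(q.eval x * Real.exp (-(x^2/2))) with hfdef
  set f' : ℝ → ℝ := fun x => (x * q.eval x - (derivative q).eval x) * Real.exp (-(x^2/2)) with hf'def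
  have hderiv : ∀ x : ℝ, HasDerivAt f (f' x) x := by
    intro x
    have h1 := (q.hasDerivAt x).mul (hasDerivAt_gaussExp x)
    have h2 := h1.neg
    refine h2.congr_deriv (Eq.symm ?_)
    simp only [hf'def]
    ring
  have hint : Integrable f' volume := by
    have := integrable_poly_gauss (X * q - derivative q)
    simpa [hf'def] using this
  have htop : Tendsto f atTop (nhds 0) := by
    have := (tendsto_poly_gauss_atTop q (b := 2⁻¹) (by norm_num)).neg
    simp only [neg_zero] at this
    have heq : f = fun x => -(q.eval x * Real.exp (-(2⁻¹ * x ^ 2))) := by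
      funext x; simp only [hfdef]; ring_nf
    rw [heq]; exact this
  have hbot : Tendsto f atBot (nhds 0) := by
    have := (tendsto_poly_gauss_atBot q (b := 2⁻¹) (by norm_num)).neg
    simp only [neg_zero] at this
    have heq : f = fun x => -(q.eval x * Real.exp (-(2⁻¹ * x ^ 2))) := by
      funext x; simp only [hfdef]; ring_nf
    rw [heq]; exact this
  have hIoi : ∫ x in Ioi (0:ℝ), f' x = 0 - f 0 :=
    integral_Ioi_of_hasDerivAt_of_tendsto (hderiv 0).continuousAt.continuousWithinAt
      (fun x _ => hderiv x) hint.integrableOn htop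
  have hIic : ∫ x in Iic (0:ℝ), f' x = f 0 - 0 :=
    integral_Iic_of_hasDerivAt_of_tendsto (hderiv 0).continuousAt.continuousWithinAt
      (fun x _ => hderiv x) hint.integrableOn hbot
  have hsplit : ∫ x, f' x = (∫ x in Iic (0:ℝ), f' x) + ∫ x in Ioi (0:ℝ), f' x := by
    rw [← setIntegral_union (Iic_disjoint_Ioi le_rfl) measurableSet_Ioi
      hint.integrableOn hint.integrableOn, Iic_union_Ioi, setIntegral_univ]
  rw [hf'def] at hsplit ⊢
  rw [hsplit, hIoi, hIic]
  ring


noncomputable abbrev γ1 : Measure ℝ := gaussianReal 0 1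

lemma γ1_eq : γ1 = Measure.withDensity volume (gaussianPDF 0 1) :=
  gaussianReal_of_var_ne_zero 0 one_ne_zero

lemma gaussianPDFReal_zero_one (x : ℝ) :
    gaussianPDFReal 0 1 x = (Real.sqrt (2 * Real.pi))⁻¹ * Real.exp (-(x^2/2)) := by
  unfold gaussianPDFReal
  push_cast
  norm_num
  left
  congr 1
  ring

lemma integral_gauss (f : ℝ → ℝ) :
    ∫ x, f x ∂γ1 = (Real.sqrt (2 * Real.pi))⁻¹ * ∫ x, f x * Real.exp (-(x^2/2)) := by
  rw [γ1_eq]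
  have hm : Measurable fun x => (gaussianPDFReal 0 1 x).toNNReal :=
    (measurable_gaussianPDFReal 0 1).real_toNNReal
  have hpdf : gaussianPDF 0 1 = fun x => ((gaussianPDFReal 0 1 x).toNNReal : ℝ≥0∞) := by
    funext x; rw [gaussianPDF, ENNReal.ofReal]
  rw [hpdf, integral_withDensity_eq_integral_smul hm f, ← integral_const_mul]
  congr 1
  funext x
  have hnn := gaussianPDFReal_nonneg 0 1 x
  rw [NNReal.smul_def, smul_eq_mul, Real.coe_toNNReal _ hnn, gaussianPDFReal_zero_one]
  ring

lemma integrable_gauss_poly (p : ℝ[X]) : Integrable (fun x => p.eval x) γ1 := by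
  rw [γ1_eq]
  have hm : Measurable fun x => (gaussianPDFReal 0 1 x).toNNReal :=
    (measurable_gaussianPDFReal 0 1).real_toNNReal
  have hpdf : gaussianPDF 0 1 = fun x => ((gaussianPDFReal 0 1 x).toNNReal : ℝ≥0∞) := by
    funext x; rw [gaussianPDF, ENNReal.ofReal]
  rw [hpdf, integrable_withDensity_iff_integrable_smul hm]
  have : (fun x => (gaussianPDFReal 0 1 x).toNNReal • p.eval x)
      = fun x => (Real.sqrt (2 * Real.pi))⁻¹ * (p.eval x * Real.exp (-(x^2/2))) := by
    funext x
    have hnn := gaussianPDFReal_nonneg 0 1 x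
    rw [NNReal.smul_def, smul_eq_mul, Real.coe_toNNReal _ hnn, gaussianPDFReal_zero_one]
    ring
  rw [this]
  exact (integrable_poly_gauss p).const_mul _

lemma stein_gauss (q : ℝ[X]) :
    ∫ x, x * q.eval x ∂γ1 = ∫ x, (derivative q).eval x ∂γ1 := by
  have h1 : ∫ x, (x * q.eval x - (derivative q).eval x) ∂γ1 = 0 := by
    rw [integral_gauss]
    rw [stein_poly q, mul_zero]
  have h2 : Integrable (fun x => x * q.eval x) γ1 := by
    have := integrable_gauss_poly (X * q)
    simp only [eval_mul, eval_X] at this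
    exact this
  have h3 : Integrable (fun x => (derivative q).eval x) γ1 := integrable_gauss_poly _
  have := integral_sub h2 h3
  rw [h1] at this
  linarith [this]

lemma integral_Hr (k : ℕ) : ∫ x, (Hr k).eval x ∂γ1 = if k = 0 then 1 else 0 := by
  induction k with
  | zero =>
    simp [Hr_zero]
  | succ k ih =>
    rw [Hr_succ]
    have h2 : Integrable (fun x => x * (Hr k).eval x) γ1 := by
      have := integrable_gauss_poly (X * Hr k)
      simp only [eval_mul, eval_X] at this
      exact this
    have h3 : Integrable (fun x => (derivative (Hr k)).eval x) γ1 := integrable_gauss_poly _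
    have : ∫ x, (X * Hr k - derivative (Hr k)).eval x ∂γ1
        = (∫ x, x * (Hr k).eval x ∂γ1) - ∫ x, (derivative (Hr k)).eval x ∂γ1 := by
      rw [← integral_sub h2 h3]
      congr 1; funext x; simp
    rw [this, stein_gauss, sub_self]
    simp

lemma Hr_orth : ∀ j k : ℕ, ∫ x, (Hr j).eval x * (Hr k).eval x ∂γ1
    = if j = k then (j.factorial : ℝ) else 0 := by
  intro j
  induction j with
  | zero =>
    intro k
    have : ∀ x : ℝ, (Hr 0).eval x * (Hr k).eval x = (Hr k).eval x := by
      intro x; rw [Hr_zero]; simp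
    simp only [this]
    rw [integral_Hr]
    by_cases h : k = 0 <;> simp [h, eq_comm]
  | succ j ih =>
    intro k
    have key : ∫ x, (Hr (j+1)).eval x * (Hr k).eval x ∂γ1
        = ∫ x, (Hr j).eval x * (derivative (Hr k)).eval x ∂γ1 := by
      have e1 : ∀ x : ℝ, (Hr (j+1)).eval x * (Hr k).eval x
          = x * ((Hr j) * (Hr k)).eval x - ((derivative (Hr j)) * Hr k).eval x := by
        intro x; rw [Hr_succ]; simp; ring
      have hst := stein_gauss ((Hr j) * (Hr k))
      have hder : derivative ((Hr j) * (Hr k))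
          = derivative (Hr j) * Hr k + Hr j * derivative (Hr k) := derivative_mul
      have h2 : Integrable (fun x => x * ((Hr j) * (Hr k)).eval x) γ1 :=
        (integrable_gauss_poly (X * (Hr j * Hr k))).congr (ae_of_all _ (fun x => by simp))
      have h3 : Integrable (fun x => ((derivative (Hr j)) * Hr k).eval x) γ1 :=
        integrable_gauss_poly _
      have h4 : Integrable (fun x => ((Hr j) * derivative (Hr k)).eval x) γ1 :=
        integrable_gauss_poly _
      calc ∫ x, (Hr (j+1)).eval x * (Hr k).eval x ∂γ1
          = ∫ x, (x * ((Hr j) * (Hr k)).eval x - ((derivative (Hr j)) * Hr k).eval x) ∂γ1 := by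
            congr 1; funext x; exact e1 x
        _ = (∫ x, x * ((Hr j) * (Hr k)).eval x ∂γ1)
            - ∫ x, ((derivative (Hr j)) * Hr k).eval x ∂γ1 := integral_sub h2 h3
        _ = (∫ x, (derivative ((Hr j) * (Hr k))).eval x ∂γ1)
            - ∫ x, ((derivative (Hr j)) * Hr k).eval x ∂γ1 := by rw [hst]
        _ = ∫ x, ((Hr j) * derivative (Hr k)).eval x ∂γ1 := by
            rw [hder]
            have : ∀ x : ℝ, (derivative (Hr j) * Hr k + Hr j * derivative (Hr k)).eval x
                = ((derivative (Hr j)) * Hr k).eval x + ((Hr j) * derivative (Hr k)).eval x := by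
              intro x; simp
            simp only [this]
            rw [integral_add h3 h4]
            ring
        _ = ∫ x, (Hr j).eval x * (derivative (Hr k)).eval x ∂γ1 := by
            congr 1; funext x; simp
    rw [key]
    cases k with
    | zero =>
      rw [Hr_zero]
      simp
    | succ k' =>
      rw [derivative_Hr (k'+1)]
      have : ∀ x : ℝ, (Hr j).eval x * (((k'+1 : ℕ) : ℝ[X]) * Hr (k'+1-1)).eval x
          = ((k'+1 : ℕ) : ℝ) * ((Hr j).eval x * (Hr k').eval x) := by
        intro x; simp; ring
      simp only [this]
      rw [integral_const_mul, ih k']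
      by_cases h : j = k'
      · subst h
        simp only [if_pos rfl, Nat.factorial_succ]
        push_cast
        ring
      · have h' : ¬ (j + 1 = k' + 1) := by omega
        simp [h, h']

lemma aeval_hermite_eq' (k : ℕ) (t : ℝ) :
    Polynomial.aeval t (Polynomial.hermite k) = (Hr k).eval t := by
  rw [Hr, Polynomial.eval_map]
  exact Polynomial.aeval_def t _



lemma nh_eq (k : ℕ) (t : ℝ) :
    normHermite k t = (Hr k).eval t / Real.sqrt (Nat.factorial k) := by
  rw [normHermite, aeval_hermite_eq']

lemma sqrt_fact_pos (k : ℕ) : (0:ℝ) < Real.sqrt (Nat.factorial k) :=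
  Real.sqrt_pos.mpr (by exact_mod_cast k.factorial_pos)

lemma nh_zero : normHermite 0 = fun _ => 1 := by
  funext t
  rw [nh_eq, Hr_zero]
  simp

lemma continuous_nh (k : ℕ) : Continuous (normHermite k) := by
  have : normHermite k = fun t => (Hr k).eval t / Real.sqrt (Nat.factorial k) := by
    funext t; exact nh_eq k t
  rw [this]
  exact (Hr k).continuous.div_const _

lemma integrable_nh_mul (j k : ℕ) :
    Integrable (fun x => normHermite j x * normHermite k x) γ1 := by
  have : (fun x => normHermite j x * normHermite k x)
      = fun x => (Real.sqrt (Nat.factorial j) * Real.sqrt (Nat.factorial k))⁻¹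
          * ((Hr j) * (Hr k)).eval x := by
    funext x
    rw [nh_eq, nh_eq, eval_mul]
    field_simp
  rw [this]
  exact (integrable_gauss_poly _).const_mul _

lemma integrable_nh (k : ℕ) : Integrable (normHermite k) γ1 := by
  have : normHermite k = fun x => (Real.sqrt (Nat.factorial k))⁻¹ * (Hr k).eval x := by
    funext x; rw [nh_eq]; field_simp
  rw [this]
  exact (integrable_gauss_poly _).const_mul _

lemma integral_nh (k : ℕ) : ∫ x, normHermite k x ∂γ1 = if k = 0 then 1 else 0 := by
  have : ∀ x, normHermite k x = (Real.sqrt (Nat.factorial k))⁻¹ * (Hr k).eval x := by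
    intro x; rw [nh_eq]; field_simp
  simp only [this]
  rw [integral_const_mul, integral_Hr]
  by_cases h : k = 0 <;> simp [h]

lemma integral_nh_mul (j k : ℕ) :
    ∫ x, normHermite j x * normHermite k x ∂γ1 = if j = k then 1 else 0 := by
  have : ∀ x, normHermite j x * normHermite k x
      = (Real.sqrt (Nat.factorial j) * Real.sqrt (Nat.factorial k))⁻¹
          * ((Hr j).eval x * (Hr k).eval x) := by
    intro x; rw [nh_eq, nh_eq]; field_simp
  simp only [this]
  rw [integral_const_mul, Hr_orth]
  by_cases h : j = k
  · subst h
    rw [if_pos rfl, if_pos rfl]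
    rw [← Real.sqrt_mul_self (Real.sqrt_nonneg _)] at *
    rw [← Real.sqrt_mul (by positivity)]
    rw [Real.sqrt_mul_self (by positivity)]
    field_simp
    rw [Real.sq_sqrt (by positivity)]
  · simp [h]

lemma hasDerivAt_nh (k : ℕ) (x : ℝ) :
    HasDerivAt (normHermite k) (Real.sqrt k * normHermite (k-1) x) x := by
  have heq : normHermite k = fun t => (Hr k).eval t / Real.sqrt (Nat.factorial k) := by
    funext t; exact nh_eq k t
  rw [heq]
  have h := ((Hr k).hasDerivAt x).div_const (Real.sqrt (Nat.factorial k))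
  refine h.congr_deriv (Eq.symm ?_)
  rw [derivative_Hr, eval_mul, eval_natCast, nh_eq]
  cases k with
  | zero => simp
  | succ k' =>
    have h1 : (k'+1 : ℕ) - 1 = k' := rfl
    rw [h1]
    have hfact : ((k'+1 : ℕ).factorial : ℝ) = (k'+1 : ℕ) * (k'.factorial : ℝ) := by
      rw [Nat.factorial_succ]; push_cast; ring
    have hsq : Real.sqrt ((k'+1:ℕ)) * Real.sqrt ((k'+1:ℕ)) = ((k'+1:ℕ):ℝ) :=
      Real.mul_self_sqrt (by positivity)
    rw [show Real.sqrt ((k'+1 : ℕ).factorial) = Real.sqrt ((k'+1:ℕ)) * Real.sqrt (k'.factorial) by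
      rw [← Real.sqrt_mul (by positivity)]; rw [hfact]]
    field_simp
    push_cast at hsq ⊢
    linear_combination (eval x (Hr k')) * hsq



section Multi

variable {m : ℕ}

noncomputable def piG (m : ℕ) : Measure (Fin m → ℝ) := Measure.pi fun _ => γ1

noncomputable def Phi (α : Fin m → ℕ) (t : Fin m → ℝ) : ℝ := ∏ i, normHermite (α i) (t i)

instance : IsProbabilityMeasure (piG m) := by
  rw [piG]; infer_instance

lemma continuous_Phi (α : Fin m → ℕ) : Continuous (Phi α) := by
  unfold Phi
  exact continuous_finset_prod _ fun i _ => (continuous_nh (α i)).comp (continuous_apply i)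

lemma pi_prod_integrable {f : Fin m → ℝ → ℝ} (hf : ∀ i, Integrable (f i) γ1) :
    Integrable (fun t : Fin m → ℝ => ∏ i, f i (t i)) (piG m) := by
  letI : MeasureSpace ℝ := ⟨γ1⟩
  haveI : SigmaFinite (volume : Measure ℝ) := by
    change SigmaFinite γ1; infer_instance
  exact MeasureTheory.Integrable.fintype_prod (f := f) hf

lemma pi_prod_integral (f : Fin m → ℝ → ℝ) :
    ∫ t, ∏ i, f i (t i) ∂(piG m) = ∏ i, ∫ x, f i x ∂γ1 := by
  letI : MeasureSpace ℝ := ⟨γ1⟩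
  haveI : SigmaFinite (volume : Measure ℝ) := by
    change SigmaFinite γ1; infer_instance
  exact MeasureTheory.integral_fintype_prod_eq_prod (μ := fun _ => γ1) f

lemma integrable_Phi_mul (α β : Fin m → ℕ) :
    Integrable (fun t => Phi α t * Phi β t) (piG m) := by
  have : (fun t => Phi α t * Phi β t)
      = fun t : Fin m → ℝ => ∏ i, (normHermite (α i) (t i) * normHermite (β i) (t i)) := by
    funext t; rw [Phi, Phi, ← Finset.prod_mul_distrib]
  rw [this]
  exact pi_prod_integrable fun i => integrable_nh_mul (α i) (β i)

lemma integrable_Phi (α : Fin m → ℕ) : Integrable (Phi α) (piG m) :=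
  pi_prod_integrable fun i => integrable_nh (α i)

lemma integral_Phi_mul (α β : Fin m → ℕ) :
    ∫ t, Phi α t * Phi β t ∂(piG m) = if α = β then 1 else 0 := by
  have h1 : ∀ t : Fin m → ℝ, Phi α t * Phi β t
      = ∏ i, (fun x => normHermite (α i) x * normHermite (β i) x) (t i) := by
    intro t; rw [Phi, Phi, ← Finset.prod_mul_distrib]
  have h2 := pi_prod_integral (m := m) (fun i => fun x => normHermite (α i) x * normHermite (β i) x)
  calc ∫ t, Phi α t * Phi β t ∂(piG m)
      = ∏ i, ∫ x, normHermite (α i) x * normHermite (β i) x ∂γ1 := by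
        rw [← h2]; congr 1; funext t; exact h1 t
    _ = ∏ i, if α i = β i then (1:ℝ) else 0 := by
        refine Finset.prod_congr rfl fun i _ => integral_nh_mul (α i) (β i)
    _ = if α = β then 1 else 0 := by
        rw [Finset.prod_boole]
        by_cases h : α = β
        · subst h; simp
        · rw [if_neg, if_neg h]
          intro hall
          exact h (funext fun i => hall i (Finset.mem_univ i))

lemma integral_Phi (α : Fin m → ℕ) :
    ∫ t, Phi α t ∂(piG m) = if α = (fun _ => 0) then 1 else 0 := by
  have h1 : ∀ t : Fin m → ℝ, Phi α t = ∏ i, (fun x => normHermite (α i) x) (t i) := fun t => rfl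
  have h2 := pi_prod_integral (m := m) (fun i => fun x => normHermite (α i) x)
  rw [show ∫ t, Phi α t ∂(piG m) = ∏ i, ∫ x, normHermite (α i) x ∂γ1 from h2]
  simp only [integral_nh]
  rw [Finset.prod_boole]
  by_cases h : α = fun _ => 0
  · subst h; simp
  · rw [if_neg, if_neg h]
    intro hall
    exact h (funext fun i => hall i (Finset.mem_univ i))

end Multi


section SqSum

variable {m : ℕ} {ι : Type*}

lemma sq_sum_expand (s : Finset ι) (idx : ι → (Fin m → ℕ)) (b : ι → ℝ) (t : Fin m → ℝ) :
    (∑ i ∈ s, b i * Phi (idx i) t)^2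
      = ∑ i ∈ s, ∑ i' ∈ s, (b i * b i') * (Phi (idx i) t * Phi (idx i') t) := by
  rw [sq, Finset.sum_mul_sum]
  refine Finset.sum_congr rfl fun i _ => Finset.sum_congr rfl fun i' _ => ?_
  ring

lemma integrable_sq_sum (s : Finset ι) (idx : ι → (Fin m → ℕ)) (b : ι → ℝ) :
    Integrable (fun t => (∑ i ∈ s, b i * Phi (idx i) t)^2) (piG m) := by
  have : (fun t => (∑ i ∈ s, b i * Phi (idx i) t)^2)
      = fun t => ∑ i ∈ s, ∑ i' ∈ s, (b i * b i') * (Phi (idx i) t * Phi (idx i') t) := by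
    funext t; exact sq_sum_expand s idx b t
  rw [this]
  refine integrable_finset_sum s fun i _ => integrable_finset_sum s fun i' _ => ?_
  exact (integrable_Phi_mul (idx i) (idx i')).const_mul _

lemma integral_sq_sum (s : Finset ι) (idx : ι → (Fin m → ℕ)) (hinj : Set.InjOn idx s)
    (b : ι → ℝ) :
    ∫ t, (∑ i ∈ s, b i * Phi (idx i) t)^2 ∂(piG m) = ∑ i ∈ s, (b i)^2 := by
  simp only [sq_sum_expand s idx b]
  rw [integral_finset_sum s fun i _ =>
    integrable_finset_sum s fun i' _ => (integrable_Phi_mul (idx i) (idx i')).const_mul _]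
  have hin : ∀ i ∈ s, ∫ t, ∑ i' ∈ s, (b i * b i') * (Phi (idx i) t * Phi (idx i') t) ∂(piG m)
      = (b i)^2 := by
    intro i hi
    rw [integral_finset_sum s fun i' _ => (integrable_Phi_mul (idx i) (idx i')).const_mul _]
    have hterm : ∀ i' ∈ s, ∫ t, (b i * b i') * (Phi (idx i) t * Phi (idx i') t) ∂(piG m)
        = if idx i = idx i' then b i * b i' else 0 := by
      intro i' _
      rw [integral_const_mul, integral_Phi_mul]
      by_cases h : idx i = idx i' <;> simp [h]
    rw [Finset.sum_congr rfl hterm]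
    rw [Finset.sum_eq_single i]
    · rw [if_pos rfl, sq]
    · intro i' hi' hne
      rw [if_neg fun h => hne (hinj hi' hi h.symm)]
    · intro h; exact absurd hi h
  exact Finset.sum_congr rfl hin

end SqSum

/-- **Derivative inverse inequality for Wiener chaos of degree `n` (`K_D = n`).**
Let `γ` be a centered Gaussian measure on a separable Hilbert space `X`.  Gaussian coordinates
are given by functionals `x ↦ ⟪w i, x⟫`, `i < m`, which are i.i.d. standard normal under `γ`
(the `w i` are `C^{-1}`-images of Cameron–Martin basis vectors), and `vt : ℕ → X` is the
corresponding orthonormal basis of the Cameron–Martin space `E`, biorthogonal to the `w i`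
(`⟪w i, vt j⟫ = δ_{ij}`), so that `D_E F(x) (vt j) = fderiv F x (vt j)`.  Let
`F x = ∑_{α ∈ A} (∏ i He_{α i}(⟪w i, x⟫)) • c α` be a `Y`-valued Hermite polynomial of
Wiener-chaos degree `≤ n` with coefficients `c α ∈ Y`, and `F̄ = E_γ[F]`.  Then for every
`u ∈ Y`, `⟨u, H_Y u⟩ = E_γ ∑_j ⟪D_E F(x) (vt j), u⟫² ≤ n E_γ ⟪F - F̄, u⟫² = n ⟨u, C_Y u⟩`. -/
theorem stmt_19 {X Y : Type*}
    [NormedAddCommGroup X] [InnerProductSpace ℝ X] [CompleteSpace X]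
    [MeasurableSpace X] [BorelSpace X]
    [NormedAddCommGroup Y] [InnerProductSpace ℝ Y] [CompleteSpace Y]
    (γ : Measure X) [IsProbabilityMeasure γ]
    (m : ℕ) (w : Fin m → X) (vt : ℕ → X)
    (hjoint : Measure.map (fun x => fun i : Fin m => ⟪w i, x⟫) γ
        = Measure.pi fun _ : Fin m => gaussianReal 0 1)
    (hbior : ∀ (i : Fin m) (j : ℕ), ⟪w i, vt j⟫ = if (i : ℕ) = j then (1 : ℝ) else 0)
    (n : ℕ) (A : Finset (Fin m → ℕ)) (hdeg : ∀ α ∈ A, (∑ i, α i) ≤ n)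
    (c : (Fin m → ℕ) → Y)
    (F : X → Y)
    (hF : ∀ x, F x = ∑ α ∈ A, (∏ i, normHermite (α i) ⟪w i, x⟫) • c α)
    (Fbar : Y) (hFbar : Fbar = ∫ x, F x ∂γ)
    (u : Y) :
    ∫ x, ∑' j : ℕ, ⟪fderiv ℝ F x (vt j), u⟫ ^ 2 ∂γ
      ≤ (n : ℝ) * ∫ x, ⟪F x - Fbar, u⟫ ^ 2 ∂γ := by
  classical
  set Tl : X →L[ℝ] (Fin m → ℝ) := ContinuousLinearMap.pi (fun i => innerSL ℝ (w i)) with hTl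
  have hT_apply : ∀ (x : X) (i : Fin m), Tl x i = ⟪w i, x⟫ := fun x i => rfl
  have hmap : Measure.map (fun x => Tl x) γ = piG m := by
    have : (fun x => Tl x) = (fun x => fun i : Fin m => ⟪w i, x⟫) := rfl
    rw [this, hjoint]; rfl
  have hTmeas : Measurable (fun x => Tl x) := Tl.continuous.measurable
  have transfer : ∀ (P : (Fin m → ℝ) → ℝ), Continuous P →
      ∫ x, P (Tl x) ∂γ = ∫ t, P t ∂(piG m) := by
    intro P hP
    rw [← hmap, integral_map hTmeas.aemeasurable hP.aestronglyMeasurable]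
  have transferInt : ∀ (P : (Fin m → ℝ) → ℝ), Continuous P → Integrable P (piG m) →
      Integrable (fun x => P (Tl x)) γ := by
    intro P hP hInt
    rw [← hmap] at hInt
    exact (integrable_map_measure hP.aestronglyMeasurable hTmeas.aemeasurable).mp hInt
  set b : (Fin m → ℕ) → ℝ := fun α => ⟪c α, u⟫ with hb
  set α₀ : Fin m → ℕ := (fun _ => 0) with hα₀
  set G : (Fin m → ℝ) → Y := fun t => ∑ α ∈ A, Phi α t • c α with hG
  have hFG : ∀ x, F x = G (Tl x) := by
    intro x; rw [hF x]; rfl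
  set upd : (Fin m → ℕ) → Fin m → (Fin m → ℕ) :=
    fun α j => Function.update α j (α j - 1) with hupd
  set DPhi : (Fin m → ℕ) → (Fin m → ℝ) → ((Fin m → ℝ) →L[ℝ] ℝ) := fun α t =>
    ∑ i, (∏ i' ∈ Finset.univ.erase i, normHermite (α i') (t i')) •
      ((Real.sqrt (α i) * normHermite (α i - 1) (t i)) • (ContinuousLinearMap.proj (R := ℝ) (φ := fun _ : Fin m => ℝ) i)) with hDPhi
  have hPhiDeriv : ∀ (α : Fin m → ℕ) (t : Fin m → ℝ), HasFDerivAt (Phi α) (DPhi α t) t := by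
    intro α t
    have hfac : ∀ i : Fin m, HasFDerivAt (fun s : Fin m → ℝ => normHermite (α i) (s i))
        ((Real.sqrt (α i) * normHermite (α i - 1) (t i)) • (ContinuousLinearMap.proj (R := ℝ) (φ := fun _ : Fin m => ℝ) i)) t := by
      intro i
      have hproj : HasFDerivAt (fun s : Fin m → ℝ => s i)
          ((ContinuousLinearMap.proj (R := ℝ) (φ := fun _ : Fin m => ℝ) i)) t := hasFDerivAt_apply i t
      exact (hasDerivAt_nh (α i) (t i)).comp_hasFDerivAt t hproj
    exact HasFDerivAt.finset_prod (u := Finset.univ)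
      (g := fun i : Fin m => fun s : Fin m → ℝ => normHermite (α i) (s i))
      (g' := fun i => (Real.sqrt (α i) * normHermite (α i - 1) (t i)) • (ContinuousLinearMap.proj (R := ℝ) (φ := fun _ : Fin m => ℝ) i))
      (fun i _ => hfac i)
  have hGDeriv : ∀ t, HasFDerivAt G (∑ α ∈ A, (DPhi α t).smulRight (c α)) t := fun t =>
    HasFDerivAt.fun_sum (fun α _ => (hPhiDeriv α t).smul_const (c α))
  have hFDeriv : ∀ x, fderiv ℝ F x = (∑ α ∈ A, (DPhi α (Tl x)).smulRight (c α)).comp Tl := by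
    intro x
    have hFeq : F = fun x => G (Tl x) := funext hFG
    rw [hFeq]
    exact ((hGDeriv (Tl x)).comp x Tl.hasFDerivAt).fderiv
  have hDPhi_single : ∀ (α : Fin m → ℕ) (t : Fin m → ℝ) (j : Fin m),
      DPhi α t (Pi.single j 1) = Real.sqrt (α j) * Phi (upd α j) t := by
    intro α t j
    rw [hDPhi]
    simp only [ContinuousLinearMap.sum_apply, ContinuousLinearMap.smul_apply,
      ContinuousLinearMap.proj_apply, smul_eq_mul]
    rw [Finset.sum_eq_single j]
    · rw [Pi.single_eq_same]
      have hPhiUpd : Phi (upd α j) t = normHermite (α j - 1) (t j)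
          * ∏ i' ∈ Finset.univ.erase j, normHermite (α i') (t i') := by
        rw [Phi, ← Finset.mul_prod_erase Finset.univ _ (Finset.mem_univ j)]
        congr 1
        · rw [hupd]; simp
        · refine Finset.prod_congr rfl fun i hi => ?_
          rw [hupd]
          simp only
          rw [Function.update_of_ne (Finset.ne_of_mem_erase hi)]
      rw [hPhiUpd]; ring
    · intro i _ hne
      rw [Pi.single_eq_of_ne hne]
      ring
    · intro h; exact absurd (Finset.mem_univ j) h
  have hLG_single : ∀ (t : Fin m → ℝ) (j : Fin m),
      ⟪(∑ α ∈ A, (DPhi α t).smulRight (c α)) (Pi.single j 1), u⟫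
        = ∑ α ∈ A, (Real.sqrt (α j) * b α) * Phi (upd α j) t := by
    intro t j
    rw [ContinuousLinearMap.sum_apply, sum_inner]
    refine Finset.sum_congr rfl fun α _ => ?_
    rw [ContinuousLinearMap.smulRight_apply, real_inner_smul_left, hDPhi_single]
    simp only [hb]
    ring
  set Dg : Fin m → (Fin m → ℝ) → ℝ :=
    fun j t => ∑ α ∈ A, (Real.sqrt (α j) * b α) * Phi (upd α j) t with hDg
  have hTvt_lt : ∀ (j : Fin m), Tl (vt (j : ℕ)) = Pi.single j 1 := by
    intro j; funext i
    rw [hT_apply, hbior]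
    by_cases h : i = j
    · subst h; simp
    · rw [if_neg (by simpa [Fin.ext_iff] using h), Pi.single_eq_of_ne h]
  have hTvt_ge : ∀ j : ℕ, m ≤ j → Tl (vt j) = 0 := by
    intro j hj; funext i
    rw [hT_apply, hbior, if_neg (by omega : ¬ (i:ℕ) = j)]
    rfl
  have hpt : ∀ x, (∑' j : ℕ, ⟪fderiv ℝ F x (vt j), u⟫ ^ 2)
      = ∑ j : Fin m, (Dg j (Tl x))^2 := by
    intro x
    have hvanish : ∀ j ∉ Finset.range m, ⟪fderiv ℝ F x (vt j), u⟫ ^ 2 = 0 := by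
      intro j hj
      rw [hFDeriv x, ContinuousLinearMap.comp_apply,
        hTvt_ge j (by simpa using hj), map_zero, inner_zero_left]
      ring
    rw [tsum_eq_sum hvanish,
      ← Fin.sum_univ_eq_sum_range (fun j => ⟪fderiv ℝ F x (vt j), u⟫ ^ 2) m]
    refine Finset.sum_congr rfl fun j _ => ?_
    rw [hFDeriv x, ContinuousLinearMap.comp_apply, hTvt_lt j, hLG_single]
  -- continuity of Dg and related functions
  have hDgCont : ∀ j : Fin m, Continuous (Dg j) := by
    intro j
    exact continuous_finset_sum _ fun α _ => continuous_const.mul (continuous_Phi (upd α j))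
  set LHSfun : (Fin m → ℝ) → ℝ := fun t => ∑ j : Fin m, (Dg j t)^2 with hLf
  have hLcont : Continuous LHSfun := continuous_finset_sum _ fun j _ => (hDgCont j).pow 2
  -- LHS computation
  have hLHS : ∫ x, ∑' j : ℕ, ⟪fderiv ℝ F x (vt j), u⟫ ^ 2 ∂γ
      = ∑ j : Fin m, ∑ α ∈ A.filter (fun α => α j ≠ 0), ((α j : ℝ)) * (b α)^2 := by
    have h1 : ∫ x, ∑' j : ℕ, ⟪fderiv ℝ F x (vt j), u⟫ ^ 2 ∂γ
        = ∫ x, LHSfun (Tl x) ∂γ :=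
      integral_congr_ae (ae_of_all _ hpt)
    rw [h1, transfer LHSfun hLcont]
    have h2 : ∫ t, LHSfun t ∂(piG m) = ∑ j : Fin m, ∫ t, (Dg j t)^2 ∂(piG m) := by
      exact integral_finset_sum _ (fun j _ => integrable_sq_sum A (fun α => upd α j)
        (fun α => Real.sqrt (α j) * b α))
    rw [h2]
    refine Finset.sum_congr rfl fun j _ => ?_
    have hfilter : ∀ t, Dg j t
        = ∑ α ∈ A.filter (fun α => α j ≠ 0), (Real.sqrt (α j) * b α) * Phi (upd α j) t := by
      intro t
      refine (Finset.sum_filter_of_ne fun α hα hne => ?_).symm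
      intro h0
      apply hne
      rw [h0]
      simp
    have hinj : Set.InjOn (fun α => upd α j) (A.filter (fun α => α j ≠ 0)) := by
      intro α hα β hβ h
      simp only [Finset.coe_filter, Set.mem_setOf_eq] at hα hβ
      funext i
      by_cases hij : i = j
      · subst hij
        have h1 := congrFun h i
        simp only [hupd, Function.update_self] at h1
        omega
      · have h1 := congrFun h i
        simpa [hupd, Function.update_of_ne hij] using h1
    calc ∫ t, (Dg j t)^2 ∂(piG m)
        = ∫ t, (∑ α ∈ A.filter (fun α => α j ≠ 0),
            (Real.sqrt (α j) * b α) * Phi (upd α j) t)^2 ∂(piG m) := by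
          congr 1; funext t; rw [hfilter t]
      _ = ∑ α ∈ A.filter (fun α => α j ≠ 0), (Real.sqrt (α j) * b α)^2 :=
          integral_sq_sum _ _ hinj _
      _ = ∑ α ∈ A.filter (fun α => α j ≠ 0), ((α j : ℝ)) * (b α)^2 := by
          refine Finset.sum_congr rfl fun α _ => ?_
          rw [mul_pow, Real.sq_sqrt (Nat.cast_nonneg _)]
  -- RHS computation
  have hFint : Integrable F γ := by
    have hFeq : F = fun x => ∑ α ∈ A, Phi α (Tl x) • c α := funext hFG
    rw [hFeq]
    exact integrable_finset_sum _ fun α _ =>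
      (transferInt (Phi α) (continuous_Phi α) (integrable_Phi α)).smul_const (c α)
  set gg : (Fin m → ℝ) → ℝ := fun t => ∑ α ∈ A, b α * Phi α t with hgg
  have hinnerF : ∀ x, ⟪F x, u⟫ = gg (Tl x) := by
    intro x
    rw [hFG x, hG]
    simp only
    rw [sum_inner]
    refine Finset.sum_congr rfl fun α _ => ?_
    rw [real_inner_smul_left]
    simp only [hb]
    ring
  have hFbar_inner : ⟪Fbar, u⟫ = (if α₀ ∈ A then b α₀ else 0) := by
    have h1 : ⟪Fbar, u⟫ = ∫ x, ⟪F x, u⟫ ∂γ := by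
      rw [real_inner_comm, hFbar, ← integral_inner hFint u]
      exact integral_congr_ae (ae_of_all _ fun x => (real_inner_comm u (F x)).symm)
    rw [h1]
    have h2 : ∫ x, ⟪F x, u⟫ ∂γ = ∫ t, gg t ∂(piG m) := by
      rw [show (fun x => ⟪F x, u⟫) = fun x => gg (Tl x) from funext hinnerF] at *
      exact transfer gg (continuous_finset_sum _ fun α _ =>
        continuous_const.mul (continuous_Phi α))
    rw [h2, hgg]
    simp only
    rw [integral_finset_sum _ (fun α _ => (integrable_Phi α).const_mul _)]
    have h3 : ∀ α ∈ A, ∫ t, b α * Phi α t ∂(piG m) = if α = α₀ then b α else 0 := by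
      intro α _
      rw [integral_const_mul, integral_Phi]
      by_cases h : α = (fun _ => 0)
      · rw [if_pos h, if_pos (by rw [hα₀]; exact h), mul_one]
      · rw [if_neg h, if_neg (by rw [hα₀]; exact h), mul_zero]
    rw [Finset.sum_congr rfl h3, Finset.sum_ite_eq' A α₀ b]
  have hPhi0 : ∀ t, Phi α₀ t = 1 := by
    intro t
    rw [Phi]
    simp [hα₀, nh_zero]
  have hcent : ∀ t, gg t - (if α₀ ∈ A then b α₀ else 0)
      = ∑ α ∈ A.erase α₀, b α * Phi α t := by
    intro t
    by_cases h : α₀ ∈ A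
    · rw [if_pos h, hgg]
      simp only
      rw [← Finset.add_sum_erase A _ h, hPhi0 t]
      ring
    · rw [if_neg h, Finset.erase_eq_of_notMem h, sub_zero]
  set RHSfun : (Fin m → ℝ) → ℝ := fun t => (∑ α ∈ A.erase α₀, b α * Phi α t)^2 with hRf
  have hRcont : Continuous RHSfun :=
    (continuous_finset_sum _ fun α _ => continuous_const.mul (continuous_Phi α)).pow 2
  have hRHS : ∫ x, ⟪F x - Fbar, u⟫^2 ∂γ = ∑ α ∈ A.erase α₀, (b α)^2 := by
    have hpt2 : ∀ x, ⟪F x - Fbar, u⟫^2 = RHSfun (Tl x) := by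
      intro x
      rw [hRf]
      simp only
      rw [inner_sub_left, hinnerF x, hFbar_inner, hcent (Tl x)]
    rw [integral_congr_ae (ae_of_all _ hpt2), transfer RHSfun hRcont]
    exact integral_sq_sum (m := m) (A.erase α₀) (fun α => α) (fun a _ b _ h => h) b
  rw [hLHS, hRHS]
  -- final arithmetic
  have step1 : ∀ j : Fin m, ∑ α ∈ A.filter (fun α => α j ≠ 0), ((α j : ℝ)) * (b α)^2
      = ∑ α ∈ A, ((α j:ℝ)) * (b α)^2 := by
    intro j
    refine Finset.sum_filter_of_ne fun α hα hne => ?_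
    intro h0; apply hne; rw [h0]; simp
  have step2 : ∑ j : Fin m, ∑ α ∈ A, ((α j:ℝ)) * (b α)^2
      = ∑ α ∈ A, (∑ j : Fin m, (α j:ℝ)) * (b α)^2 := by
    rw [Finset.sum_comm]
    exact Finset.sum_congr rfl fun α _ => (Finset.sum_mul _ _ _).symm
  have step3 : ∑ α ∈ A, (∑ j : Fin m, (α j : ℝ)) * (b α)^2
      = ∑ α ∈ A.erase α₀, (∑ j : Fin m, (α j:ℝ)) * (b α)^2 := by
    refine (Finset.sum_erase _ ?_).symm
    simp [hα₀]
  have step4 : ∑ α ∈ A.erase α₀, (∑ j : Fin m, (α j:ℝ)) * (b α)^2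
      ≤ ∑ α ∈ A.erase α₀, (n:ℝ) * (b α)^2 := by
    refine Finset.sum_le_sum fun α hα => ?_
    refine mul_le_mul_of_nonneg_right ?_ (sq_nonneg _)
    have hd := hdeg α (Finset.mem_of_mem_erase hα)
    calc ∑ j : Fin m, (α j : ℝ) = ((∑ j, α j : ℕ) : ℝ) := by push_cast; ring
      _ ≤ (n : ℝ) := by exact_mod_cast hd
  calc ∑ j : Fin m, ∑ α ∈ A.filter (fun α => α j ≠ 0), ((α j : ℝ)) * (b α)^2
      = ∑ j : Fin m, ∑ α ∈ A, ((α j:ℝ)) * (b α)^2 :=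
        Finset.sum_congr rfl fun j _ => step1 j
    _ = ∑ α ∈ A, (∑ j : Fin m, (α j:ℝ)) * (b α)^2 := step2
    _ = ∑ α ∈ A.erase α₀, (∑ j : Fin m, (α j:ℝ)) * (b α)^2 := step3
    _ ≤ ∑ α ∈ A.erase α₀, (n:ℝ) * (b α)^2 := step4
    _ = (n:ℝ) * ∑ α ∈ A.erase α₀, (b α)^2 := (Finset.mul_sum _ _ _).symm

end Aux
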